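/- Let n ≥ 2 be an integer. For every strip S₁ ⊆ ℝ² and every a > 0, setting S₂ = {(x,y) ∈ ℝ² : |x| < a} (a strip whose axis coincides with the y-axis), one has μ₂(ℝ²)·μ₂(S₁ ∩ S₂) ≥ μ₂(S₁)·μ₂(S₂), where μ₂ is the measure on ℝ² with density C(n)·|x|^{n−2}·e^{−(x²+y²)/2}. -/

import Mathlib

open MeasureTheory

/-- A strip in `ℝ²`: the set of points whose inner product with some unit vector `u`
is smaller than `h > 0` in absolute value. -/
def IsStrip (S : Set (ℝ × ℝ)) : Prop :=
  ∃ u : ℝ × ℝ, ∃ h : ℝ, u.1 ^ 2 + u.2 ^ 2 = 1 ∧ 0 < h ∧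
    S = {p : ℝ × ℝ | |p.1 * u.1 + p.2 * u.2| < h}

/-- The measure `μ₂` on `ℝ²` with density `C(n)·|x|^(n-2)·exp(-(x²+y²)/2)`,
where `C(n) = (∫_{-π/2}^{π/2} cos(t)^(n-2) dt)⁻¹`. -/
noncomputable def mu2 (n : ℕ) : Measure (ℝ × ℝ) :=
  volume.withDensity
    (fun p => ENNReal.ofReal
      ((∫ t in (-(Real.pi / 2))..(Real.pi / 2), Real.cos t ^ (n - 2))⁻¹ *
        |p.1| ^ (n - 2) * Real.exp (-(p.1 ^ 2 + p.2 ^ 2) / 2)))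

lemma ennreal_rearrange {a b c d : ENNReal} (hab : a ≤ b) (hcd : c ≤ d) :
    a * d + b * c ≤ a * c + b * d := by
  obtain ⟨e, rfl⟩ := exists_add_of_le hab
  obtain ⟨f, rfl⟩ := exists_add_of_le hcd
  calc a * (c + f) + (a + e) * c = (a * c + (a + e) * c) + a * f := by ring
    _ ≤ (a * c + (a + e) * c) + (a + e) * f := by
        exact add_le_add_right (mul_le_mul_left (show a ≤ a + e from le_self_add) _) _
    _ = a * c + (a + e) * (c + f) := by ring

lemma cheb_aux (F φ ψ : ℝ → ENNReal) (hF : Measurable F) (hφ : Measurable φ) (hψ : Measurable ψ)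
    (hmono : ∀ x z : ℝ, φ x * ψ z + φ z * ψ x ≤ φ x * ψ x + φ z * ψ z) :
    (∫⁻ x, F x * φ x) * (∫⁻ x, F x * ψ x) ≤ (∫⁻ x, F x) * (∫⁻ x, F x * (φ x * ψ x)) := by
  set A := ∫⁻ x, F x * φ x with hA
  set B := ∫⁻ x, F x * ψ x with hB
  set T := ∫⁻ x, F x with hT
  set M := ∫⁻ x, F x * (φ x * ψ x) with hM
  have pointwise : ∀ x z : ℝ, (F x * φ x) * (F z * ψ z) + (F x * ψ x) * (F z * φ z)
      ≤ (F x * (φ x * ψ x)) * F z + F x * (F z * (φ z * ψ z)) := by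
    intro x z
    calc (F x * φ x) * (F z * ψ z) + (F x * ψ x) * (F z * φ z)
        = F x * F z * (φ x * ψ z + φ z * ψ x) := by ring
      _ ≤ F x * F z * (φ x * ψ x + φ z * ψ z) := mul_le_mul_right (hmono x z) _
      _ = (F x * (φ x * ψ x)) * F z + F x * (F z * (φ z * ψ z)) := by ring
  have lhs_eq : (∫⁻ x, ∫⁻ z, (F x * φ x) * (F z * ψ z) + (F x * ψ x) * (F z * φ z))
      = A * B + B * A := by
    have inner : ∀ x : ℝ, (∫⁻ z, (F x * φ x) * (F z * ψ z) + (F x * ψ x) * (F z * φ z))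
        = (F x * φ x) * B + (F x * ψ x) * A := by
      intro x
      rw [lintegral_add_left ((show Measurable (fun z => F z * ψ z) from hF.mul hψ).const_mul _), lintegral_const_mul _ (show Measurable (fun z => F z * ψ z) from hF.mul hψ),
        lintegral_const_mul _ (show Measurable (fun z => F z * φ z) from hF.mul hφ)]
    simp only [inner]
    rw [lintegral_add_left ((show Measurable (fun z => F z * φ z) from hF.mul hφ).mul_const _), lintegral_mul_const _ (show Measurable (fun z => F z * φ z) from hF.mul hφ),
      lintegral_mul_const _ (show Measurable (fun z => F z * ψ z) from hF.mul hψ)]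
  have rhs_eq : (∫⁻ x, ∫⁻ z, (F x * (φ x * ψ x)) * F z + F x * (F z * (φ z * ψ z)))
      = M * T + T * M := by
    have inner : ∀ x : ℝ, (∫⁻ z, (F x * (φ x * ψ x)) * F z + F x * (F z * (φ z * ψ z)))
        = (F x * (φ x * ψ x)) * T + F x * M := by
      intro x
      rw [lintegral_add_left (hF.const_mul _), lintegral_const_mul _ hF,
        lintegral_const_mul _ (show Measurable (fun z => F z * (φ z * ψ z)) from hF.mul (hφ.mul hψ))]
    simp only [inner]
    rw [lintegral_add_left ((show Measurable (fun z => F z * (φ z * ψ z)) from hF.mul (hφ.mul hψ)).mul_const _),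
      lintegral_mul_const _ (show Measurable (fun z => F z * (φ z * ψ z)) from hF.mul (hφ.mul hψ)), lintegral_mul_const _ hF]
  have key : A * B + B * A ≤ M * T + T * M := by
    rw [← lhs_eq, ← rhs_eq]
    exact lintegral_mono fun x => lintegral_mono fun z => pointwise x z
  have key2 : 2 * (A * B) ≤ 2 * (T * M) := by
    rw [two_mul, two_mul]
    calc A * B + A * B = A * B + B * A := by rw [mul_comm A B]
      _ ≤ M * T + T * M := key
      _ = T * M + T * M := by rw [mul_comm M T]
  exact (ENNReal.mul_le_mul_iff_right (by norm_num) (by norm_num)).mp key2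

lemma gauss_integrable : MeasureTheory.Integrable (fun y : ℝ => Real.exp (-y ^ 2 / 2)) := by
  have h := integrable_exp_neg_mul_sq (b := (1:ℝ)/2) (by norm_num)
  convert h using 2 with y
  ring_nf

lemma gauss_m_anti (L : ℝ) (hL : 0 < L) {s t : ℝ} (hst : |s| ≤ |t|) :
    (∫ y in (t - L)..(t + L), Real.exp (-y ^ 2 / 2))
      ≤ ∫ y in (s - L)..(s + L), Real.exp (-y ^ 2 / 2) := by
  set g : ℝ → ℝ := fun y => Real.exp (-y ^ 2 / 2) with hg
  set m : ℝ → ℝ := fun t => ∫ y in (t - L)..(t + L), g y with hmdef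
  have hg_cont : Continuous g := by
    apply Real.continuous_exp.comp; continuity
  have hΦ : ∀ b : ℝ, HasDerivAt (fun u => ∫ y in (0:ℝ)..u, g y) (g b) b := fun b =>
    intervalIntegral.integral_hasDerivAt_right (gauss_integrable.intervalIntegrable)
      (hg_cont.stronglyMeasurable.stronglyMeasurableAtFilter) hg_cont.continuousAt
  have hm_eq : ∀ u : ℝ, m u = (∫ y in (0:ℝ)..(u + L), g y) - ∫ y in (0:ℝ)..(u - L), g y := by
    intro u
    have := intervalIntegral.integral_add_adjacent_intervals (a := (0:ℝ)) (b := u - L)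
      (c := u + L) (f := g) (gauss_integrable.intervalIntegrable)
      (gauss_integrable.intervalIntegrable)
    simp only [hmdef]
    linarith
  have hm : ∀ u : ℝ, HasDerivAt m (g (u + L) - g (u - L)) u := by
    intro u
    have h1 : HasDerivAt (fun v : ℝ => ∫ y in (0:ℝ)..(v + L), g y) (g (u + L)) u := by
      have := (hΦ (u + L)).comp u ((hasDerivAt_id u).add_const L)
      simpa [Function.comp_def] using this
    have h2 : HasDerivAt (fun v : ℝ => ∫ y in (0:ℝ)..(v - L), g y) (g (u - L)) u := by
      have := (hΦ (u - L)).comp u ((hasDerivAt_id u).sub_const L)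
      simpa [Function.comp_def] using this
    have h3 := h1.sub h2
    apply h3.congr_of_eventuallyEq
    filter_upwards with v using (hm_eq v)
  have hm_even : ∀ u : ℝ, m (-u) = m u := by
    intro u
    have h1 : (∫ y in (u - L)..(u + L), g (-y)) = ∫ y in (-(u + L))..(-(u - L)), g y :=
      intervalIntegral.integral_comp_neg (a := u - L) (b := u + L) (f := g)
    have h2 : ∀ y : ℝ, g (-y) = g y := by intro y; simp [hg]
    simp only [h2] at h1
    simp only [hmdef]
    rw [h1]
    congr 1 <;> ring
  have anti : AntitoneOn m (Set.Ici (0:ℝ)) := by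
    apply antitoneOn_of_deriv_nonpos (convex_Ici 0)
    · exact fun u _ => ((hm u).differentiableAt.continuousAt).continuousWithinAt
    · exact fun u _ => ((hm u).differentiableAt.differentiableWithinAt)
    · intro u hu
      rw [interior_Ici] at hu
      rw [(hm u).deriv]
      have h4 : g (u + L) ≤ g (u - L) := by
        apply Real.exp_le_exp.mpr
        have : (u - L) ^ 2 ≤ (u + L) ^ 2 := by nlinarith [le_of_lt (Set.mem_Ioi.mp hu), hL]
        linarith
      linarith
  have habs : ∀ u : ℝ, m u = m |u| := by
    intro u
    rcases abs_cases u with ⟨h1, _⟩ | ⟨h1, _⟩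
    · rw [h1]
    · rw [h1, hm_even]
  calc m t = m |t| := habs t
    _ ≤ m |s| := anti (abs_nonneg s) (abs_nonneg t) hst
    _ = m s := (habs s).symm

set_option maxHeartbeats 1000000 in
/-- For every strip `S₁` and every strip `S₂ = {|x| < a}` whose axis coincides with the
`y`-axis, one has `μ₂(ℝ²)·μ₂(S₁ ∩ S₂) ≥ μ₂(S₁)·μ₂(S₂)`. -/
theorem strip_correlation_y_axis (n : ℕ) (hn : 2 ≤ n)
    (S₁ : Set (ℝ × ℝ)) (hS₁ : IsStrip S₁) (a : ℝ) (ha : 0 < a) :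
    mu2 n S₁ * mu2 n {p : ℝ × ℝ | |p.1| < a} ≤
      mu2 n Set.univ * mu2 n (S₁ ∩ {p : ℝ × ℝ | |p.1| < a}) := by
  obtain ⟨u, h, hu, hh, rfl⟩ := hS₁
  set Cinv : ℝ := (∫ t in (-(Real.pi / 2))..(Real.pi / 2), Real.cos t ^ (n - 2))⁻¹ with hCinvdef
  have hCinv : 0 ≤ Cinv := by
    apply inv_nonneg.mpr
    apply intervalIntegral.integral_nonneg (by linarith [Real.pi_pos])
    intro t ht
    exact pow_nonneg (Real.cos_nonneg_of_mem_Icc ht) _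
  set g : ℝ → ℝ := fun y => Real.exp (-y ^ 2 / 2) with hgdef
  set F : ℝ → ENNReal := fun x => ENNReal.ofReal (Cinv * |x| ^ (n - 2) * Real.exp (-x ^ 2 / 2))
    with hFdef
  set Gd : ℝ → ENNReal := fun y => ENNReal.ofReal (g y) with hGddef
  have hFmeas : Measurable F := by
    apply Measurable.ennreal_ofReal
    apply Measurable.mul
    · exact (measurable_id.abs.pow_const _).const_mul _
    · exact (Real.continuous_exp.comp (by continuity)).measurable
  have hGdmeas : Measurable Gd := by
    apply Measurable.ennreal_ofReal
    exact (Real.continuous_exp.comp (by continuity)).measurable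
  set T₁ : Set (ℝ × ℝ) := {p : ℝ × ℝ | |p.1 * u.1 + p.2 * u.2| < h} with hT₁def
  set T₂ : Set (ℝ × ℝ) := {p : ℝ × ℝ | |p.1| < a} with hT₂def
  have hmT₁ : MeasurableSet T₁ := by
    have hmf : Measurable fun p : ℝ × ℝ => |p.1 * u.1 + p.2 * u.2| := by
      apply Measurable.abs
      exact (measurable_fst.mul_const _).add (measurable_snd.mul_const _)
    exact measurableSet_lt hmf measurable_const
  have hmT₂ : MeasurableSet T₂ := by
    have hmf : Measurable fun p : ℝ × ℝ => |p.1| := measurable_fst.abs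
    exact measurableSet_lt hmf measurable_const
  set sect : Set (ℝ × ℝ) → ℝ → ENNReal :=
    fun T x => ∫⁻ y, T.indicator (fun p => Gd p.2) (x, y) with hsectdef
  have hind : ∀ (T : Set (ℝ × ℝ)) (x y : ℝ),
      T.indicator (fun p => Gd p.2) (x, y) = ({y | (x, y) ∈ T} : Set ℝ).indicator Gd y := by
    intro T x y
    by_cases hy : (x, y) ∈ T
    · rw [Set.indicator_of_mem hy,
        Set.indicator_of_mem (show y ∈ {y : ℝ | (x, y) ∈ T} from hy)]
    · rw [Set.indicator_of_notMem hy,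
        Set.indicator_of_notMem (show y ∉ {y : ℝ | (x, y) ∈ T} from hy)]
  have hsect_meas : ∀ T : Set (ℝ × ℝ), MeasurableSet T → Measurable (sect T) := by
    intro T hT
    exact Measurable.lintegral_prod_right' ((hGdmeas.comp measurable_snd).indicator hT)
  have hmu : ∀ T : Set (ℝ × ℝ), MeasurableSet T → mu2 n T = ∫⁻ x, F x * sect T x := by
    intro T hT
    have hDmeas : Measurable (fun p : ℝ × ℝ => ENNReal.ofReal
        ((∫ t in (-(Real.pi / 2))..(Real.pi / 2), Real.cos t ^ (n - 2))⁻¹ *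
          |p.1| ^ (n - 2) * Real.exp (-(p.1 ^ 2 + p.2 ^ 2) / 2))) := by
      apply Measurable.ennreal_ofReal
      apply Measurable.mul
      · exact (measurable_fst.abs.pow_const _).const_mul _
      · exact (Real.continuous_exp.comp (by continuity)).measurable
    rw [mu2, withDensity_apply _ hT, ← lintegral_indicator hT, Measure.volume_eq_prod,
      lintegral_prod _ ((hDmeas.indicator hT).aemeasurable)]
    have inner : ∀ x : ℝ, (∫⁻ y, T.indicator (fun p : ℝ × ℝ => ENNReal.ofReal
        ((∫ t in (-(Real.pi / 2))..(Real.pi / 2), Real.cos t ^ (n - 2))⁻¹ *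
          |p.1| ^ (n - 2) * Real.exp (-(p.1 ^ 2 + p.2 ^ 2) / 2))) (x, y))
        = F x * ∫⁻ y, T.indicator (fun p => Gd p.2) (x, y) := by
      intro x
      have hmeasy : Measurable fun y : ℝ => T.indicator (fun p => Gd p.2) (x, y) :=
        ((hGdmeas.comp measurable_snd).indicator hT).comp measurable_prodMk_left
      rw [← lintegral_const_mul _ hmeasy]
      apply lintegral_congr fun y => ?_
      by_cases hxy : (x, y) ∈ T
      · simp only [Set.indicator_of_mem hxy]
        show ENNReal.ofReal ((∫ t in (-(Real.pi / 2))..(Real.pi / 2), Real.cos t ^ (n - 2))⁻¹ *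
          |x| ^ (n - 2) * Real.exp (-(x ^ 2 + y ^ 2) / 2)) = F x * Gd y
        rw [hFdef, hGddef]
        rw [← ENNReal.ofReal_mul (by positivity)]
        congr 1
        have hexp : Real.exp (-(x ^ 2 + y ^ 2) / 2)
            = Real.exp (-x ^ 2 / 2) * Real.exp (-y ^ 2 / 2) := by
          rw [← Real.exp_add]; congr 1; ring
        rw [hexp, hgdef, hCinvdef]
        ring
      · simp only [Set.indicator_of_notMem hxy, mul_zero]
    exact lintegral_congr fun x => inner x
  -- specific sections
  set c : ENNReal := ∫⁻ y, Gd y with hcdef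
  set χ : ℝ → ENNReal := fun x => if |x| < a then 1 else 0 with hχdef
  have hχmeas : Measurable χ := by
    apply Measurable.ite _ measurable_const measurable_const
    exact measurableSet_lt measurable_id.abs measurable_const
  have hχanti : ∀ x z : ℝ, |x| ≤ |z| → χ z ≤ χ x := by
    intro x z hxz
    by_cases hz : |z| < a
    · have hx : |x| < a := lt_of_le_of_lt hxz hz
      simp [hχdef, hx, hz]
    · simp [hχdef, hz]
  have sect_univ : ∀ x : ℝ, sect Set.univ x = c := by
    intro x
    simp [hsectdef, hcdef]
  have sect_T₂ : ∀ x : ℝ, sect T₂ x = χ x * c := by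
    intro x
    by_cases hx : |x| < a
    · have hmem : ∀ y : ℝ, (x, y) ∈ T₂ := fun y => hx
      rw [show χ x = 1 from if_pos hx, one_mul]
      exact lintegral_congr fun y => Set.indicator_of_mem (hmem y) _
    · have hmem : ∀ y : ℝ, (x, y) ∉ T₂ := fun y => hx
      rw [show χ x = 0 from if_neg hx, zero_mul]
      show (∫⁻ y, T₂.indicator (fun p => Gd p.2) (x, y)) = 0
      rw [lintegral_congr fun y => Set.indicator_of_notMem (hmem y) _]
      exact lintegral_zero
  have sect_inter : ∀ x : ℝ, sect (T₁ ∩ T₂) x = χ x * sect T₁ x := by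
    intro x
    by_cases hx : |x| < a
    · rw [show χ x = 1 from if_pos hx, one_mul]
      apply lintegral_congr fun y => ?_
      by_cases hy : (x, y) ∈ T₁
      · rw [Set.indicator_of_mem (Set.mem_inter hy hx), Set.indicator_of_mem hy]
      · rw [Set.indicator_of_notMem (fun hc : (x, y) ∈ T₁ ∩ T₂ => hy hc.1),
          Set.indicator_of_notMem hy]
    · rw [show χ x = 0 from if_neg hx, zero_mul]
      show (∫⁻ y, (T₁ ∩ T₂).indicator (fun p => Gd p.2) (x, y)) = 0
      rw [lintegral_congr fun y =>
        Set.indicator_of_notMem (fun hc : (x, y) ∈ T₁ ∩ T₂ => hx hc.2) _]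
      exact lintegral_zero
  set G : ℝ → ENNReal := sect T₁ with hGdef
  have hGmeas : Measurable G := hsect_meas T₁ hmT₁
  have hG_anti : ∀ x z : ℝ, |x| ≤ |z| → G z ≤ G x := by
    by_cases hu2 : u.2 = 0
    · have hu1sq : u.1 ^ 2 = 1 := by
        have := hu; rw [hu2] at this; nlinarith
      have hu1 : |u.1| = 1 := by nlinarith [sq_abs u.1, abs_nonneg u.1]
      have hmemT₁ : ∀ x y : ℝ, (x, y) ∈ T₁ ↔ |x| < h := by
        intro x y
        simp only [hT₁def, Set.mem_setOf_eq, hu2, mul_zero, add_zero, abs_mul, hu1, mul_one]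
      intro x z hxz
      by_cases hx : |x| < h
      · have e1 : G x = ∫⁻ y, Gd y :=
          lintegral_congr fun y => Set.indicator_of_mem ((hmemT₁ x y).mpr hx) _
        rw [e1]
        refine lintegral_mono fun y => ?_
        rw [hind]
        exact Set.indicator_le_self _ _ _
      · have hz : ¬ |z| < h := fun hc => hx (lt_of_le_of_lt hxz hc)
        have e1 : G z = 0 := by
          show (∫⁻ y, T₁.indicator (fun p => Gd p.2) (z, y)) = 0
          rw [lintegral_congr fun y =>
            Set.indicator_of_notMem (fun hc => hz ((hmemT₁ z y).mp hc)) _]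
          exact lintegral_zero
        rw [e1]
        exact zero_le
    · set L : ℝ := h / |u.2| with hLdef
      have hL : 0 < L := div_pos hh (abs_pos.mpr hu2)
      have hformula : ∀ x : ℝ,
          G x = ENNReal.ofReal (∫ y in (-(x * u.1) / u.2 - L)..(-(x * u.1) / u.2 + L), g y) := by
        intro x
        set cx : ℝ := -(x * u.1) / u.2 with hcxdef
        have hsec : {y : ℝ | (x, y) ∈ T₁} = Set.Ioo (cx - L) (cx + L) := by
          ext y
          simp only [hT₁def, Set.mem_setOf_eq, Set.mem_Ioo]
          have hkey : x * u.1 + y * u.2 = u.2 * (y - cx) := by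
            rw [hcxdef]; field_simp; ring
          rw [hkey, abs_mul]
          rw [show h = |u.2| * L from by rw [hLdef]; field_simp]
          rw [mul_lt_mul_iff_right₀ (abs_pos.mpr hu2), abs_lt]
          constructor
          · rintro ⟨h1, h2⟩; constructor <;> linarith
          · rintro ⟨h1, h2⟩; constructor <;> linarith
        have e1 : G x = ∫⁻ y in Set.Ioo (cx - L) (cx + L), Gd y := by
          rw [← lintegral_indicator measurableSet_Ioo]
          exact lintegral_congr fun y => by rw [hind, hsec]
        rw [e1]
        rw [← ofReal_integral_eq_lintegral_ofReal
          ((by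
            have hi := gauss_integrable
            rw [show (fun y : ℝ => Real.exp (-y ^ 2 / 2)) = g from rfl] at hi
            exact hi.integrableOn))
          (Filter.Eventually.of_forall fun y => Real.exp_nonneg _)]
        congr 1
        rw [intervalIntegral.integral_of_le (by linarith), integral_Ioc_eq_integral_Ioo]
      intro x z hxz
      rw [hformula x, hformula z]
      apply ENNReal.ofReal_le_ofReal
      apply gauss_m_anti L hL
      rw [abs_div, abs_div, abs_neg, abs_neg, abs_mul, abs_mul]
      gcongr
  -- assemble
  rw [hmu T₁ hmT₁, hmu T₂ hmT₂, hmu (T₁ ∩ T₂) (hmT₁.inter hmT₂), hmu Set.univ MeasurableSet.univ]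
  simp only [sect_univ, sect_T₂, sect_inter, ← hGdef]
  have e2 : (∫⁻ x, F x * (χ x * c)) = (∫⁻ x, F x * χ x) * c := by
    rw [← lintegral_mul_const _ (show Measurable (fun x => F x * χ x) from hFmeas.mul hχmeas)]
    exact lintegral_congr fun x => by ring
  have e3 : (∫⁻ x, F x * c) = (∫⁻ x, F x) * c := lintegral_mul_const _ hFmeas
  rw [e2, e3]
  have hmono : ∀ x z : ℝ, χ x * G z + χ z * G x ≤ χ x * G x + χ z * G z := by
    intro x z
    rcases le_total |x| |z| with hle | hle
    · have h1 := hχanti x z hle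
      have h2 := hG_anti x z hle
      calc χ x * G z + χ z * G x = χ z * G x + χ x * G z := by ring
        _ ≤ χ z * G z + χ x * G x := ennreal_rearrange h1 h2
        _ = χ x * G x + χ z * G z := by ring
    · exact ennreal_rearrange (hχanti z x hle) (hG_anti z x hle)
  have hcheb := cheb_aux F χ G hFmeas hχmeas hGmeas hmono
  calc (∫⁻ x, F x * G x) * ((∫⁻ x, F x * χ x) * c)
      = ((∫⁻ x, F x * χ x) * (∫⁻ x, F x * G x)) * c := by ring
    _ ≤ ((∫⁻ x, F x) * (∫⁻ x, F x * (χ x * G x))) * c := mul_le_mul_left hcheb c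
    _ = ((∫⁻ x, F x) * c) * (∫⁻ x, F x * (χ x * G x)) := by ring
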